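/- arXiv:0812.2143 — 4 statements merged into one kernel-verified Lean document; each statement's English description precedes it below -/
import Mathlib

section
/- For any choice of signs ε_a, ε_b, ε_c ∈ {+1,−1}, setting a₊=b₊=c₊=1/2 and a₋=ε_a/2, b₋=ε_b/2, c₋=ε_c/2, the 9×9 matrix R̂ (defined from these parameters as above) satisfies the constant braid equation R̂₁₂ R̂₂₃ R̂₁₂ = R̂₂₃ R̂₁₂ R̂₂₃, where R̂₁₂ = R̂ ⊗ I₃ and R̂₂₃ = I₃ ⊗ R̂ are 27×27 matrices. -/
open Matrix

/-- The 9×9 exotic braid matrix with parameters `a₊, a₋, b₊, b₋, c₊, c₋`. -/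
noncomputable def Rhat9 (ap am bp bm cp cm : ℝ) : Matrix (Fin 9) (Fin 9) ℝ :=
  !![ap,0,0,0,0,0,0,0,am;
     0,bp,0,0,0,0,0,bm,0;
     0,0,ap,0,0,0,am,0,0;
     0,0,0,cp,0,cm,0,0,0;
     0,0,0,0,1,0,0,0,0;
     0,0,0,cm,0,cp,0,0,0;
     0,0,am,0,0,0,ap,0,0;
     0,bm,0,0,0,0,0,bp,0;
     am,0,0,0,0,0,0,0,ap]

/-- Lexicographic identification of `Fin 3 × Fin 3` with `Fin 9`. -/
def enc (p : Fin 3 × Fin 3) : Fin 9 :=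
  ⟨3 * p.1.val + p.2.val, by have := p.1.isLt; have := p.2.isLt; omega⟩

/-- The braid matrix reindexed by pairs `(i,j)`, `i,j ∈ {1,2,3}`, ordered lexicographically. -/
noncomputable def RhatP (ap am bp bm cp cm : ℝ) :
    Matrix (Fin 3 × Fin 3) (Fin 3 × Fin 3) ℝ :=
  fun p q => Rhat9 ap am bp bm cp cm (enc p) (enc q)

/-- `R ⊗ I₃`, acting on the first two factors of `(ℝ³)⊗³ ≅ ℝ²⁷`. -/
def M12 (R : Matrix (Fin 3 × Fin 3) (Fin 3 × Fin 3) ℝ) :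
    Matrix (Fin 3 × Fin 3 × Fin 3) (Fin 3 × Fin 3 × Fin 3) ℝ :=
  fun x y => R (x.1, x.2.1) (y.1, y.2.1) * (if x.2.2 = y.2.2 then 1 else 0)

/-- `I₃ ⊗ R`, acting on the last two factors. -/
def M23 (R : Matrix (Fin 3 × Fin 3) (Fin 3 × Fin 3) ℝ) :
    Matrix (Fin 3 × Fin 3 × Fin 3) (Fin 3 × Fin 3 × Fin 3) ℝ :=
  fun x y => (if x.1 = y.1 then (1:ℝ) else 0) * R (x.2.1, x.2.2) (y.2.1, y.2.2)

/-! ### Auxiliary machinery -/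

/-- The order-reversal involution of `Fin 3`. -/
def rev (i : Fin 3) : Fin 3 := ⟨2 - i.val, by omega⟩

@[simp] lemma rev_rev (i : Fin 3) : rev (rev i) = i := by fin_cases i <;> rfl

/-- The sign attached to the basis vector `(i,j)` by the signed involution `Σ`. -/
def dsign (ea eb ec : ℝ) (i j : Fin 3) : ℝ :=
  if i = 1 then (if j = 1 then 1 else ec) else (if j = 1 then eb else ea)

lemma dsign_rev_left (ea eb ec : ℝ) (i j : Fin 3) :
    dsign ea eb ec (rev i) j = dsign ea eb ec i j := by
  fin_cases i <;> rfl

lemma dsign_rev_right (ea eb ec : ℝ) (i j : Fin 3) :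
    dsign ea eb ec i (rev j) = dsign ea eb ec i j := by
  fin_cases j <;> rfl

lemma dsign_sq (ea eb ec : ℝ) (ha : ea * ea = 1) (hb : eb * eb = 1)
    (hc : ec * ec = 1) (i j : Fin 3) :
    dsign ea eb ec i j * dsign ea eb ec i j = 1 := by
  fin_cases i <;> fin_cases j <;> simp [dsign] <;> assumption

/-- A "signed functional matrix": single nonzero entry `g x` in row `x`, at column `f x`. -/
def SP {n : Type*} [Fintype n] [DecidableEq n] (f : n → n) (g : n → ℝ) :
    Matrix n n ℝ := fun x y => if y = f x then g x else 0

lemma SP_mul {n : Type*} [Fintype n] [DecidableEq n] (f f' : n → n) (g g' : n → ℝ) :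
    SP f g * SP f' g' = SP (fun x => f' (f x)) (fun x => g x * g' (f x)) := by
  ext x y
  simp only [Matrix.mul_apply, SP]
  rw [Finset.sum_eq_single (f x)]
  · simp
  · intro b _ hb; simp [hb]
  · simp

/-- The signed involution `Σ` with `R̂ = (1 + Σ)/2`. -/
noncomputable def Sg (ea eb ec : ℝ) : Matrix (Fin 3 × Fin 3) (Fin 3 × Fin 3) ℝ :=
  SP (fun p => (rev p.1, rev p.2)) (fun p => dsign ea eb ec p.1 p.2)

set_option maxHeartbeats 1000000 in
lemma RhatP_eq (ea eb ec : ℝ) :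
    RhatP (1/2) (ea/2) (1/2) (eb/2) (1/2) (ec/2)
      = (2⁻¹ : ℝ) • (1 + Sg ea eb ec) := by
  ext p q
  fin_cases p <;> fin_cases q <;>
    norm_num [RhatP, Rhat9, enc, Sg, SP, dsign, rev, Matrix.one_apply,
      Matrix.smul_apply, Matrix.add_apply, Prod.ext_iff, Fin.ext_iff,
      Matrix.cons_val_succ', Matrix.cons_val_zero'] <;> ring

lemma M12_SP (f : Fin 3 × Fin 3 → Fin 3 × Fin 3) (g : Fin 3 × Fin 3 → ℝ) :
    M12 (SP f g) = SP (fun x => ((f (x.1, x.2.1)).1, (f (x.1, x.2.1)).2, x.2.2))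
      (fun x => g (x.1, x.2.1)) := by
  ext ⟨x1, x2, x3⟩ ⟨y1, y2, y3⟩
  simp only [M12, SP, Prod.ext_iff]
  by_cases h1 : y1 = (f (x1, x2)).1 <;> by_cases h2 : y2 = (f (x1, x2)).2 <;>
    by_cases h3 : x3 = y3 <;>
    simp_all [Prod.ext_iff, eq_comm]

lemma M23_SP (f : Fin 3 × Fin 3 → Fin 3 × Fin 3) (g : Fin 3 × Fin 3 → ℝ) :
    M23 (SP f g) = SP (fun x => (x.1, (f (x.2.1, x.2.2)).1, (f (x.2.1, x.2.2)).2))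
      (fun x => g (x.2.1, x.2.2)) := by
  ext ⟨x1, x2, x3⟩ ⟨y1, y2, y3⟩
  simp only [M23, SP, Prod.ext_iff]
  by_cases h1 : x1 = y1 <;> by_cases h2 : y2 = (f (x2, x3)).1 <;>
    by_cases h3 : y3 = (f (x2, x3)).2 <;>
    simp_all [Prod.ext_iff, eq_comm]

lemma M12_one : M12 1 = 1 := by
  ext ⟨x1, x2, x3⟩ ⟨y1, y2, y3⟩
  simp only [M12, Matrix.one_apply, Prod.ext_iff]
  by_cases h1 : x1 = y1 <;> by_cases h2 : x2 = y2 <;> by_cases h3 : x3 = y3 <;>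
    simp_all [Prod.ext_iff]

lemma M23_one : M23 1 = 1 := by
  ext ⟨x1, x2, x3⟩ ⟨y1, y2, y3⟩
  simp only [M23, Matrix.one_apply, Prod.ext_iff]
  by_cases h1 : x1 = y1 <;> by_cases h2 : x2 = y2 <;> by_cases h3 : x3 = y3 <;>
    simp_all [Prod.ext_iff]

lemma M12_add (A B : Matrix (Fin 3 × Fin 3) (Fin 3 × Fin 3) ℝ) :
    M12 (A + B) = M12 A + M12 B := by
  ext x y; simp only [M12, Matrix.add_apply, mul_ite, mul_one, mul_zero]
  split_ifs <;> simp

lemma M23_add (A B : Matrix (Fin 3 × Fin 3) (Fin 3 × Fin 3) ℝ) :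
    M23 (A + B) = M23 A + M23 B := by
  ext x y; simp only [M23, Matrix.add_apply, ite_mul, one_mul, zero_mul]
  split_ifs <;> simp

lemma M12_smul (c : ℝ) (A : Matrix (Fin 3 × Fin 3) (Fin 3 × Fin 3) ℝ) :
    M12 (c • A) = c • M12 A := by
  ext x y; simp [M12, Matrix.smul_apply]

lemma M23_smul (c : ℝ) (A : Matrix (Fin 3 × Fin 3) (Fin 3 × Fin 3) ℝ) :
    M23 (c • A) = c • M23 A := by
  ext x y; simp [M23, Matrix.smul_apply]

/-! ### The braid relations for the signed involution parts -/

section Core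

variable (ea eb ec : ℝ)

/-- `S₁ = Σ ⊗ I`. -/
noncomputable def S1 : Matrix (Fin 3 × Fin 3 × Fin 3) (Fin 3 × Fin 3 × Fin 3) ℝ :=
  SP (fun x => (rev x.1, rev x.2.1, x.2.2)) (fun x => dsign ea eb ec x.1 x.2.1)

/-- `S₂ = I ⊗ Σ`. -/
noncomputable def S2 : Matrix (Fin 3 × Fin 3 × Fin 3) (Fin 3 × Fin 3 × Fin 3) ℝ :=
  SP (fun x => (x.1, rev x.2.1, rev x.2.2)) (fun x => dsign ea eb ec x.2.1 x.2.2)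

lemma M12_Sg : M12 (Sg ea eb ec) = S1 ea eb ec := by
  rw [Sg, M12_SP]; rfl

lemma M23_Sg : M23 (Sg ea eb ec) = S2 ea eb ec := by
  rw [Sg, M23_SP]; rfl

variable (ha : ea * ea = 1) (hb : eb * eb = 1) (hc : ec * ec = 1)

include ha hb hc

lemma S1_sq : S1 ea eb ec * S1 ea eb ec = 1 := by
  rw [S1, SP_mul]
  ext x y
  rcases eq_or_ne x y with rfl | hxy
  · simp [SP, rev_rev, Prod.mk.eta, Matrix.one_apply, dsign_rev_left, dsign_rev_right,
      dsign_sq ea eb ec ha hb hc]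
  · simp [SP, Matrix.one_apply, hxy, Ne.symm hxy, rev_rev, Prod.mk.eta]

lemma S2_sq : S2 ea eb ec * S2 ea eb ec = 1 := by
  rw [S2, SP_mul]
  ext x y
  rcases eq_or_ne x y with rfl | hxy
  · simp [SP, rev_rev, Prod.mk.eta, Matrix.one_apply, dsign_rev_left, dsign_rev_right,
      dsign_sq ea eb ec ha hb hc]
  · simp [SP, Matrix.one_apply, hxy, Ne.symm hxy, rev_rev, Prod.mk.eta]

lemma S1S2S1 : S1 ea eb ec * S2 ea eb ec * S1 ea eb ec = S2 ea eb ec := by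
  rw [S1, S2, SP_mul, SP_mul]
  ext x y
  simp only [SP, rev_rev, dsign_rev_left, dsign_rev_right]
  split_ifs with h
  · have h2 := dsign_sq ea eb ec ha hb hc x.1 x.2.1
    linear_combination dsign ea eb ec x.2.1 x.2.2 * h2
  · rfl

lemma S2S1S2 : S2 ea eb ec * S1 ea eb ec * S2 ea eb ec = S1 ea eb ec := by
  rw [S1, S2, SP_mul, SP_mul]
  ext x y
  simp only [SP, rev_rev, dsign_rev_left, dsign_rev_right]
  split_ifs with h
  · have h2 := dsign_sq ea eb ec ha hb hc x.2.1 x.2.2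
    linear_combination dsign ea eb ec x.1 x.2.1 * h2
  · rfl

end Core

/-- abstract algebra step -/
lemma braid_alg {A : Type*} [Ring A] [Algebra ℝ A] (s t : A)
    (hs : s * s = 1) (ht : t * t = 1) (hsts : s * t * s = t) (htst : t * s * t = s) :
    ((2⁻¹ : ℝ) • (1 + s)) * ((2⁻¹ : ℝ) • (1 + t)) * ((2⁻¹ : ℝ) • (1 + s)) =
    ((2⁻¹ : ℝ) • (1 + t)) * ((2⁻¹ : ℝ) • (1 + s)) * ((2⁻¹ : ℝ) • (1 + t)) := by
  have e1 : (1 + s) * (1 + t) * (1 + s)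
      = 1 + s + t + s * t + (s + s * s) + (t * s + s * t * s) := by noncomm_ring
  have e2 : (1 + t) * (1 + s) * (1 + t)
      = 1 + t + s + t * s + (t + t * t) + (s * t + t * s * t) := by noncomm_ring
  simp only [smul_mul_assoc, mul_smul_comm, smul_smul]
  rw [e1, e2, hs, ht, hsts, htst]
  congr 1
  abel

/-- For any choice of signs ε_a, ε_b, ε_c ∈ {+1,−1}, with a₊=b₊=c₊=1/2,
a₋=ε_a/2, b₋=ε_b/2, c₋=ε_c/2, the matrix R̂ satisfies the constant braid equation. -/
theorem stmt1 (ea eb ec : ℝ) (ha : ea = 1 ∨ ea = -1) (hb : eb = 1 ∨ eb = -1)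
    (hc : ec = 1 ∨ ec = -1) :
    M12 (RhatP (1/2) (ea/2) (1/2) (eb/2) (1/2) (ec/2)) *
      M23 (RhatP (1/2) (ea/2) (1/2) (eb/2) (1/2) (ec/2)) *
      M12 (RhatP (1/2) (ea/2) (1/2) (eb/2) (1/2) (ec/2)) =
    M23 (RhatP (1/2) (ea/2) (1/2) (eb/2) (1/2) (ec/2)) *
      M12 (RhatP (1/2) (ea/2) (1/2) (eb/2) (1/2) (ec/2)) *
      M23 (RhatP (1/2) (ea/2) (1/2) (eb/2) (1/2) (ec/2)) := by
  have ha2 : ea * ea = 1 := by rcases ha with rfl | rfl <;> norm_num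
  have hb2 : eb * eb = 1 := by rcases hb with rfl | rfl <;> norm_num
  have hc2 : ec * ec = 1 := by rcases hc with rfl | rfl <;> norm_num
  rw [RhatP_eq, M12_smul, M23_smul, M12_add, M23_add, M12_one, M23_one, M12_Sg, M23_Sg]
  exact braid_alg _ _ (S1_sq ea eb ec ha2 hb2 hc2) (S2_sq ea eb ec ha2 hb2 hc2)
    (S1S2S1 ea eb ec ha2 hb2 hc2) (S2S1S2 ea eb ec ha2 hb2 hc2)
end

section
/- For real parameters θ, m₁₁±, m₂₁±, m₂₂±, define a₊=(e^{m₁₁⁺θ}+e^{m₁₁⁻θ})/2, a₋=(e^{m₁₁⁺θ}−e^{m₁₁⁻θ})/2, and similarly b±, c± from m₂₁±, m₂₂±. Then the matrix R̂(θ) satisfies the baxterized braid equation R̂₁₂(θ) R̂₂₃(θ+θ′) R̂₁₂(θ′) = R̂₂₃(θ′) R̂₁₂(θ+θ′) R̂₂₃(θ) for all real θ, θ′, where R̂₁₂(θ)=R̂(θ)⊗I₃ and R̂₂₃(θ)=I₃⊗R̂(θ). -/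
open Matrix

/-- `a₊(θ) = (e^{m⁺θ} + e^{m⁻θ})/2`. -/
noncomputable def aP (mp mm θ : ℝ) : ℝ := (Real.exp (mp * θ) + Real.exp (mm * θ)) / 2

/-- `a₋(θ) = (e^{m⁺θ} − e^{m⁻θ})/2`. -/
noncomputable def aM (mp mm θ : ℝ) : ℝ := (Real.exp (mp * θ) - Real.exp (mm * θ)) / 2

/-- The baxterized braid matrix `R̂(θ)` built from the parameters `m₁₁±, m₂₁±, m₂₂±`. -/
noncomputable def RhatTheta (m11p m11m m21p m21m m22p m22m θ : ℝ) :
    Matrix (Fin 3 × Fin 3) (Fin 3 × Fin 3) ℝ :=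
  RhatP (aP m11p m11m θ) (aM m11p m11m θ) (aP m21p m21m θ) (aM m21p m21m θ)
    (aP m22p m22m θ) (aM m22p m22m θ)

def sig : Fin 3 → Fin 3 := ![2, 1, 0]

@[simp] lemma sig0 : sig 0 = 2 := rfl
@[simp] lemma sig1 : sig 1 = 1 := rfl
@[simp] lemma sig2 : sig 2 = 0 := rfl
@[simp] lemma sig_sig (a : Fin 3) : sig (sig a) = a := by fin_cases a <;> rfl
lemma sig_injective : Function.Injective sig := by decide
@[simp] lemma sig_inj {a b : Fin 3} : sig a = sig b ↔ a = b := sig_injective.eq_iff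
@[simp] lemma eq_sig {a b : Fin 3} : (a = sig b) ↔ (sig a = b) := by
  constructor <;> rintro rfl <;> simp

noncomputable def dv (ap bp cp : ℝ) : Fin 3 → Fin 3 → ℝ :=
  ![![ap,bp,ap],![cp,1,cp],![ap,bp,ap]]
noncomputable def ev (am bm cm : ℝ) : Fin 3 → Fin 3 → ℝ :=
  ![![am,bm,am],![cm,0,cm],![am,bm,am]]

@[simp] lemma fin3_mk2 (h : 2 < 3) : (⟨2, h⟩ : Fin 3) = 2 := rfl
@[simp] lemma fin3_mk1 (h : 1 < 3) : (⟨1, h⟩ : Fin 3) = 1 := rfl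
@[simp] lemma fin3_mk0 (h : 0 < 3) : (⟨0, h⟩ : Fin 3) = 0 := rfl

lemma Rform (ap am bp bm cp cm : ℝ) : RhatP ap am bp bm cp cm =
    fun p q => dv ap bp cp p.1 p.2 *
        ((if q.1 = p.1 then (1:ℝ) else 0) * (if q.2 = p.2 then 1 else 0))
      + ev am bm cm p.1 p.2 *
        ((if q.1 = sig p.1 then (1:ℝ) else 0) * (if q.2 = sig p.2 then 1 else 0)) := by
  ext ⟨i,j⟩ ⟨k,l⟩
  fin_cases i <;> fin_cases j <;> fin_cases k <;> fin_cases l <;>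
    norm_num [RhatP, Rhat9, enc, dv, ev, sig, Fin.ext_iff, Matrix.vecHead, Matrix.vecTail, Matrix.cons_val_two, Matrix.tail_cons]

set_option maxHeartbeats 0 in
lemma key (a b c d e f a' b' c' d' e' f' : ℝ) :
    M12 (RhatP a b c d e f) *
      M23 (RhatP (a*a'+b*b') (a*b'+b*a') (c*c'+d*d') (c*d'+d*c') (e*e'+f*f') (e*f'+f*e')) *
      M12 (RhatP a' b' c' d' e' f') =
    M23 (RhatP a' b' c' d' e' f') *
      M12 (RhatP (a*a'+b*b') (a*b'+b*a') (c*c'+d*d') (c*d'+d*c') (e*e'+f*f') (e*f'+f*e')) *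
      M23 (RhatP a b c d e f) := by
  simp only [Rform]
  ext ⟨x1,x2,x3⟩ ⟨y1,y2,y3⟩
  fin_cases x1 <;> fin_cases x2 <;> fin_cases x3 <;>
    (simp only [fin3_mk0, fin3_mk1, fin3_mk2, Matrix.mul_apply, M12, M23, Fintype.sum_prod_type, add_mul, mul_add,
      mul_ite, ite_mul, one_mul, mul_one, zero_mul, mul_zero, Finset.sum_add_distrib,
      Finset.sum_ite_eq, Finset.sum_ite_eq', Finset.mem_univ, if_true,
      Finset.sum_const_zero, add_zero, zero_add, sig0, sig1, sig2, sig_sig, sig_inj, eq_sig,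
      dv, ev, Matrix.cons_val_zero, Matrix.cons_val_one, Matrix.head_cons]
     all_goals (fin_cases y1 <;> fin_cases y2 <;> fin_cases y3 <;>
       norm_num [sig, dv, ev, Fin.ext_iff, Matrix.cons_val_two, Matrix.tail_cons, Matrix.head_cons] <;> ring))

lemma aP_add (mp mm θ θ' : ℝ) :
    aP mp mm (θ + θ') = aP mp mm θ * aP mp mm θ' + aM mp mm θ * aM mp mm θ' := by
  simp only [aP, aM, mul_add, Real.exp_add]; ring

lemma aM_add (mp mm θ θ' : ℝ) :
    aM mp mm (θ + θ') = aP mp mm θ * aM mp mm θ' + aM mp mm θ * aP mp mm θ' := by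
  simp only [aP, aM, mul_add, Real.exp_add]; ring

/-- The baxterized braid equation
`R̂₁₂(θ) R̂₂₃(θ+θ′) R̂₁₂(θ′) = R̂₂₃(θ′) R̂₁₂(θ+θ′) R̂₂₃(θ)`. -/
theorem stmt2 (m11p m11m m21p m21m m22p m22m : ℝ) (θ θ' : ℝ) :
    M12 (RhatTheta m11p m11m m21p m21m m22p m22m θ) *
      M23 (RhatTheta m11p m11m m21p m21m m22p m22m (θ + θ')) *
      M12 (RhatTheta m11p m11m m21p m21m m22p m22m θ') =
    M23 (RhatTheta m11p m11m m21p m21m m22p m22m θ') *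
      M12 (RhatTheta m11p m11m m21p m21m m22p m22m (θ + θ')) *
      M23 (RhatTheta m11p m11m m21p m21m m22p m22m θ) := by
  simp only [RhatTheta, aP_add, aM_add]
  exact key _ _ _ _ _ _ _ _ _ _ _ _
end

section
/- Let A be an associative unital ℝ-algebra and T a 3×3 matrix with entries k,p,l;q,r,s;m,t,n in A. Suppose R T₁ T₂ = T₂ T₁ R where R is the constant 9×9 R-matrix with a₊=b₊=c₊=a₋=b₋=c₋=1/2 (case (+,+,+)), T₁=T⊗I₃, T₂=I₃⊗T (as 9×9 matrices over A). Then k² = n², kn = nk, l² = m², lm = ml, km = nl, kl = nm, lk = mn, mk = ln, r(k−n) = (k−n)r = 0, and r(l−m) = (l−m)r = 0. -/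
open Matrix

/-- The flip permutation `P(e_i ⊗ e_j) = e_j ⊗ e_i`. -/
def Pflip : Matrix (Fin 3 × Fin 3) (Fin 3 × Fin 3) ℝ :=
  fun p q => if p.1 = q.2 ∧ p.2 = q.1 then 1 else 0

/-- The constant R-matrix `R = P·R̂`, with entries viewed in the ℝ-algebra `A`. -/
noncomputable def RmatA (A : Type*) [Ring A] [Algebra ℝ A] (ap am bp bm cp cm : ℝ) :
    Matrix (Fin 3 × Fin 3) (Fin 3 × Fin 3) A :=
  (Pflip * RhatP ap am bp bm cp cm).map (algebraMap ℝ A)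

/-- `T₁ = T ⊗ I₃` over the algebra `A`. -/
def T1 {A : Type*} [Ring A] (T : Matrix (Fin 3) (Fin 3) A) :
    Matrix (Fin 3 × Fin 3) (Fin 3 × Fin 3) A :=
  fun x y => if x.2 = y.2 then T x.1 y.1 else 0

/-- `T₂ = I₃ ⊗ T` over the algebra `A`. -/
def T2 {A : Type*} [Ring A] (T : Matrix (Fin 3) (Fin 3) A) :
    Matrix (Fin 3 × Fin 3) (Fin 3 × Fin 3) A :=
  fun x y => if x.1 = y.1 then T x.2 y.2 else 0


open Matrix in
private lemma cons_val_five' {α : Type*} {m : ℕ} (x : α) (u : Fin (m+5) → α) :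
    vecCons x u 5 = vecHead (vecTail (vecTail (vecTail (vecTail u)))) := rfl
open Matrix in
private lemma cons_val_six' {α : Type*} {m : ℕ} (x : α) (u : Fin (m+6) → α) :
    vecCons x u 6 = vecHead (vecTail (vecTail (vecTail (vecTail (vecTail u))))) := rfl
open Matrix in
private lemma cons_val_seven' {α : Type*} {m : ℕ} (x : α) (u : Fin (m+7) → α) :
    vecCons x u 7 = vecHead (vecTail (vecTail (vecTail (vecTail (vecTail (vecTail u)))))) := rfl
open Matrix in
private lemma cons_val_eight' {α : Type*} {m : ℕ} (x : α) (u : Fin (m+8) → α) :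
    vecCons x u 8 = vecHead (vecTail (vecTail (vecTail (vecTail (vecTail (vecTail (vecTail u))))))) := rfl

private lemma alg_mul' {A : Type*} [Ring A] [Algebra ℝ A] (c : ℝ) (x : A) :
    algebraMap ℝ A c * x = c • x := (Algebra.smul_def c x).symm

private lemma mul_alg' {A : Type*} [Ring A] [Algebra ℝ A] (c : ℝ) (x : A) :
    x * algebraMap ℝ A c = c • x := by
  rw [Algebra.algebraMap_eq_smul_one, mul_smul_comm, mul_one]

private lemma half_cancel' {A : Type*} [Ring A] [Algebra ℝ A] {x y : A}
    (h : (2⁻¹ : ℝ) • x = (2⁻¹ : ℝ) • y) : x = y := by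
  have h2 := congrArg (fun z => (2 : ℝ) • z) h
  simpa [smul_smul] using h2

set_option maxHeartbeats 2000000 in
/-- RTT relations in the case (+,+,+) imply the relation set (N). -/
theorem stmt6 {A : Type*} [Ring A] [Algebra ℝ A] (k p l q r s m t n : A)
    (hRTT : RmatA A (1/2) (1/2) (1/2) (1/2) (1/2) (1/2) *
        T1 !![k,p,l;q,r,s;m,t,n] * T2 !![k,p,l;q,r,s;m,t,n] =
      T2 !![k,p,l;q,r,s;m,t,n] * T1 !![k,p,l;q,r,s;m,t,n] *
        RmatA A (1/2) (1/2) (1/2) (1/2) (1/2) (1/2)) :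
    k * k = n * n ∧ k * n = n * k ∧ l * l = m * m ∧ l * m = m * l ∧
    k * m = n * l ∧ k * l = n * m ∧ l * k = m * n ∧ m * k = l * n ∧
    r * (k - n) = 0 ∧ (k - n) * r = 0 ∧ r * (l - m) = 0 ∧ (l - m) * r = 0 := by
  have h0 := congrFun (congrFun hRTT ((2:Fin 3),(2:Fin 3))) ((0:Fin 3),(0:Fin 3))
  have h1 := congrFun (congrFun hRTT ((0:Fin 3),(2:Fin 3))) ((0:Fin 3),(2:Fin 3))
  have h2 := congrFun (congrFun hRTT ((2:Fin 3),(2:Fin 3))) ((2:Fin 3),(2:Fin 3))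
  have h3 := congrFun (congrFun hRTT ((0:Fin 3),(2:Fin 3))) ((2:Fin 3),(0:Fin 3))
  have h4 := congrFun (congrFun hRTT ((0:Fin 3),(2:Fin 3))) ((0:Fin 3),(0:Fin 3))
  have h5 := congrFun (congrFun hRTT ((2:Fin 3),(2:Fin 3))) ((0:Fin 3),(2:Fin 3))
  have h6 := congrFun (congrFun hRTT ((2:Fin 3),(2:Fin 3))) ((2:Fin 3),(0:Fin 3))
  have h7 := congrFun (congrFun hRTT ((2:Fin 3),(0:Fin 3))) ((0:Fin 3),(0:Fin 3))
  have h8 := congrFun (congrFun hRTT ((2:Fin 3),(1:Fin 3))) ((1:Fin 3),(0:Fin 3))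
  have h9 := congrFun (congrFun hRTT ((1:Fin 3),(0:Fin 3))) ((2:Fin 3),(1:Fin 3))
  have h10 := congrFun (congrFun hRTT ((2:Fin 3),(1:Fin 3))) ((1:Fin 3),(2:Fin 3))
  have h11 := congrFun (congrFun hRTT ((1:Fin 3),(0:Fin 3))) ((0:Fin 3),(1:Fin 3))
  simp [Matrix.mul_apply, Fintype.sum_prod_type, Fin.sum_univ_succ, RmatA, Pflip,
    RhatP, Rhat9, enc, T1, T2, Matrix.map_apply,
    cons_val_five', cons_val_six', cons_val_seven', cons_val_eight',
    Matrix.vecHead, Matrix.vecTail, Function.comp, add_mul,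
    alg_mul', mul_alg', smul_mul_assoc, mul_smul_comm] at h0 h1 h2 h3 h4 h5 h6 h7 h8 h9 h10 h11
  rw [← smul_add, ← smul_add] at h0 h1 h6 h7 h8 h9
  replace h0 := half_cancel' h0
  replace h1 := half_cancel' h1
  replace h6 := half_cancel' h6
  replace h7 := half_cancel' h7
  replace h8 := half_cancel' h8
  replace h9 := half_cancel' h9
  refine ⟨?_, ?_, h2, h3, h4, h5, ?_, ?_, ?_, ?_, ?_, ?_⟩
  · rw [add_comm (m*m) (n*n)] at h0
    exact add_right_cancel h0
  · rw [add_comm (m*l) (k*n)] at h1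
    exact add_right_cancel h1
  · rw [add_comm (n*m) (m*n)] at h6
    exact add_right_cancel h6
  · rw [add_comm (m*k) (k*m)] at h7
    exact add_left_cancel h7
  · rw [add_comm (r*m) (r*n)] at h8
    have h := add_right_cancel h8
    rw [mul_sub, h, sub_self]
  · rw [add_comm (l*r) (n*r)] at h9
    have h := add_right_cancel h9
    rw [sub_mul, h, sub_self]
  · rw [mul_sub, h10, sub_self]
  · rw [sub_mul, h11, sub_self]
end

section
/- Under the RTT relations with the constant R-matrix in the case a₊=a₋ (with b₊=±b₋, c₊=±c₋ arbitrary among the allowed constant solutions), the generators satisfy p² = t², pt = tp, q² = s², and qs = sq. Equivalently, in terms of p̃=(p+t)/2, t̃=(p−t)/2, q̃=(q+s)/2, s̃=(q−s)/2, one has p̃t̃ = t̃p̃ = 0 and q̃s̃ = s̃q̃ = 0. -/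
open Matrix

private theorem v3_2 {α : Type*} (a0 a1 a2 : α) : ![a0,a1,a2] 2 = a2 := rfl
private theorem v9_2 {α : Type*} (a0 a1 a2 a3 a4 a5 a6 a7 a8 : α) : ![a0,a1,a2,a3,a4,a5,a6,a7,a8] 2 = a2 := rfl
private theorem v9_3 {α : Type*} (a0 a1 a2 a3 a4 a5 a6 a7 a8 : α) : ![a0,a1,a2,a3,a4,a5,a6,a7,a8] 3 = a3 := rfl
private theorem v9_4 {α : Type*} (a0 a1 a2 a3 a4 a5 a6 a7 a8 : α) : ![a0,a1,a2,a3,a4,a5,a6,a7,a8] 4 = a4 := rfl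
private theorem v9_5 {α : Type*} (a0 a1 a2 a3 a4 a5 a6 a7 a8 : α) : ![a0,a1,a2,a3,a4,a5,a6,a7,a8] 5 = a5 := rfl
private theorem v9_6 {α : Type*} (a0 a1 a2 a3 a4 a5 a6 a7 a8 : α) : ![a0,a1,a2,a3,a4,a5,a6,a7,a8] 6 = a6 := rfl
private theorem v9_7 {α : Type*} (a0 a1 a2 a3 a4 a5 a6 a7 a8 : α) : ![a0,a1,a2,a3,a4,a5,a6,a7,a8] 7 = a7 := rfl
private theorem v9_8 {α : Type*} (a0 a1 a2 a3 a4 a5 a6 a7 a8 : α) : ![a0,a1,a2,a3,a4,a5,a6,a7,a8] 8 = a8 := rfl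
private theorem w9_5 {α : Type*} (a0 a1 a2 a3 a4 : α) (u : Fin 4 → α) :
  Matrix.vecCons a0 (Matrix.vecCons a1 (Matrix.vecCons a2 (Matrix.vecCons a3 (Matrix.vecCons a4 u)))) (5 : Fin 9) = u 0 := rfl
private theorem w9_6 {α : Type*} (a0 a1 a2 a3 a4 : α) (u : Fin 4 → α) :
  Matrix.vecCons a0 (Matrix.vecCons a1 (Matrix.vecCons a2 (Matrix.vecCons a3 (Matrix.vecCons a4 u)))) (6 : Fin 9) = u 1 := rfl
private theorem w9_7 {α : Type*} (a0 a1 a2 a3 a4 : α) (u : Fin 4 → α) :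
  Matrix.vecCons a0 (Matrix.vecCons a1 (Matrix.vecCons a2 (Matrix.vecCons a3 (Matrix.vecCons a4 u)))) (7 : Fin 9) = u 2 := rfl
private theorem w9_8 {α : Type*} (a0 a1 a2 a3 a4 : α) (u : Fin 4 → α) :
  Matrix.vecCons a0 (Matrix.vecCons a1 (Matrix.vecCons a2 (Matrix.vecCons a3 (Matrix.vecCons a4 u)))) (8 : Fin 9) = u 3 := rfl

private theorem halfL {A : Type*} [Ring A] [Algebra ℝ A] {x1 x2 y1 y2 : A}
    (h : (algebraMap ℝ A) 2⁻¹ * x1 * x2 + (algebraMap ℝ A) 2⁻¹ * y1 * y2 = x1 * x2) :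
    x1 * x2 = y1 * y2 := by
  set c : A := (algebraMap ℝ A) 2⁻¹ with hcdef
  set X := x1 * x2
  set Y := y1 * y2
  have h' : c * X + c * Y = X := by
    rw [← mul_assoc, ← mul_assoc]; exact h
  have h2c : c + c = (1 : A) := by rw [hcdef, ← map_add]; norm_num
  have hX : c * X + c * X = X := by rw [← add_mul, h2c, one_mul]
  have hY : c * Y = c * X := add_left_cancel (h'.trans hX.symm)
  have h2 := congrArg (fun z => (algebraMap ℝ A) 2 * z) hY
  simp only [← mul_assoc, hcdef, ← _root_.map_mul] at h2
  norm_num at h2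
  exact h2.symm

private theorem halfR {A : Type*} [Ring A] [Algebra ℝ A] {x1 x2 y1 y2 : A}
    (h : x1 * x2 * (algebraMap ℝ A) 2⁻¹ + y1 * y2 * (algebraMap ℝ A) 2⁻¹ = x1 * x2) :
    x1 * x2 = y1 * y2 := by
  set c : A := (algebraMap ℝ A) 2⁻¹ with hcdef
  set X := x1 * x2
  set Y := y1 * y2
  have h2c : c + c = (1 : A) := by rw [hcdef, ← map_add]; norm_num
  have hX : X * c + X * c = X := by rw [← mul_add, h2c, mul_one]
  have hY : Y * c = X * c := by
    have := h.trans hX.symm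
    rw [add_comm (X * c) (X * c)] at this
    exact add_right_cancel ((add_comm (X*c) (Y*c)) ▸ this)
  have h2 := congrArg (fun z => z * (algebraMap ℝ A) 2) hY
  simp only [mul_assoc, hcdef, ← _root_.map_mul] at h2
  norm_num at h2
  exact h2.symm

set_option maxHeartbeats 2000000 in
/-- RTT relations in the case `a₊ = a₋` (with `b₋, c₋ = ±1/2` arbitrary) imply
`p² = t²`, `pt = tp`, `q² = s²`, `qs = sq`; equivalently `p̃t̃ = t̃p̃ = 0` and
`q̃s̃ = s̃q̃ = 0` for `p̃=(p+t)/2`, `t̃=(p−t)/2`, `q̃=(q+s)/2`, `s̃=(q−s)/2`. -/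
theorem stmt7 {A : Type*} [Ring A] [Algebra ℝ A] (k p l q r s m t n : A)
    (bm cm : ℝ) (hb : bm = 1/2 ∨ bm = -(1/2)) (hc : cm = 1/2 ∨ cm = -(1/2))
    (hRTT : RmatA A (1/2) (1/2) (1/2) bm (1/2) cm *
        T1 !![k,p,l;q,r,s;m,t,n] * T2 !![k,p,l;q,r,s;m,t,n] =
      T2 !![k,p,l;q,r,s;m,t,n] * T1 !![k,p,l;q,r,s;m,t,n] *
        RmatA A (1/2) (1/2) (1/2) bm (1/2) cm) :
    (p * p = t * t ∧ p * t = t * p ∧ q * q = s * s ∧ q * s = s * q) ∧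
    (((1/2 : ℝ) • (p + t)) * ((1/2 : ℝ) • (p - t)) = 0 ∧
     ((1/2 : ℝ) • (p - t)) * ((1/2 : ℝ) • (p + t)) = 0 ∧
     ((1/2 : ℝ) • (q + s)) * ((1/2 : ℝ) • (q - s)) = 0 ∧
     ((1/2 : ℝ) • (q - s)) * ((1/2 : ℝ) • (q + s)) = 0) := by
  have h1 := congrFun (congrFun hRTT ((0,0))) ((1,1))
  simp only [RmatA, RhatP, Rhat9, Pflip, enc, T1, T2, Matrix.mul_apply, Matrix.map_apply,
    Fintype.sum_prod_type, Fin.sum_univ_succ, Fin.sum_univ_zero] at h1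
  simp (config := { decide := true }) [Matrix.cons_val_zero, Matrix.cons_val_one,
    Matrix.head_cons, Matrix.cons_val_fin_one, Matrix.cons_val', Matrix.head_fin_const,
    Matrix.vecHead, Matrix.vecTail,
    v3_2, v9_2, v9_3, v9_4, v9_5, v9_6, v9_7, v9_8, w9_5, w9_6, w9_7, w9_8,
    map_add, map_zero, -Matrix.cons_zero_zero] at h1
  have h2 := congrFun (congrFun hRTT ((0,2))) ((1,1))
  simp only [RmatA, RhatP, Rhat9, Pflip, enc, T1, T2, Matrix.mul_apply, Matrix.map_apply,
    Fintype.sum_prod_type, Fin.sum_univ_succ, Fin.sum_univ_zero] at h2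
  simp (config := { decide := true }) [Matrix.cons_val_zero, Matrix.cons_val_one,
    Matrix.head_cons, Matrix.cons_val_fin_one, Matrix.cons_val', Matrix.head_fin_const,
    Matrix.vecHead, Matrix.vecTail,
    v3_2, v9_2, v9_3, v9_4, v9_5, v9_6, v9_7, v9_8, w9_5, w9_6, w9_7, w9_8,
    map_add, map_zero, -Matrix.cons_zero_zero] at h2
  have h3 := congrFun (congrFun hRTT ((1,1))) ((0,0))
  simp only [RmatA, RhatP, Rhat9, Pflip, enc, T1, T2, Matrix.mul_apply, Matrix.map_apply,
    Fintype.sum_prod_type, Fin.sum_univ_succ, Fin.sum_univ_zero] at h3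
  simp (config := { decide := true }) [Matrix.cons_val_zero, Matrix.cons_val_one,
    Matrix.head_cons, Matrix.cons_val_fin_one, Matrix.cons_val', Matrix.head_fin_const,
    Matrix.vecHead, Matrix.vecTail,
    v3_2, v9_2, v9_3, v9_4, v9_5, v9_6, v9_7, v9_8, w9_5, w9_6, w9_7, w9_8,
    map_add, map_zero, -Matrix.cons_zero_zero] at h3
  have h4 := congrFun (congrFun hRTT ((1,1))) ((0,2))
  simp only [RmatA, RhatP, Rhat9, Pflip, enc, T1, T2, Matrix.mul_apply, Matrix.map_apply,
    Fintype.sum_prod_type, Fin.sum_univ_succ, Fin.sum_univ_zero] at h4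
  simp (config := { decide := true }) [Matrix.cons_val_zero, Matrix.cons_val_one,
    Matrix.head_cons, Matrix.cons_val_fin_one, Matrix.cons_val', Matrix.head_fin_const,
    Matrix.vecHead, Matrix.vecTail,
    v3_2, v9_2, v9_3, v9_4, v9_5, v9_6, v9_7, v9_8, w9_5, w9_6, w9_7, w9_8,
    map_add, map_zero, -Matrix.cons_zero_zero] at h4
  -- h1 : c*p*p + c*t*t = p*p ; h2 : c*t*p + c*p*t = t*p
  -- h3 : q*q = q*q*c + s*s*c ; h4 : q*s = s*q*c + q*s*c
  have hpp : p * p = t * t := halfL h1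
  have htp : t * p = p * t := halfL h2
  have hqq : q * q = s * s := halfR h3.symm
  have hqs : q * s = s * q := by
    rw [add_comm] at h4
    exact halfR h4.symm
  have hpt : p * t = t * p := htp.symm
  have hsq : s * q = q * s := hqs.symm
  refine ⟨⟨hpp, hpt, hqq, hqs⟩, ?_, ?_, ?_, ?_⟩
  · have e : (p + t) * (p - t) = 0 := by
      rw [add_mul, mul_sub, mul_sub, hpp, hpt]; abel
    rw [smul_mul_assoc, mul_smul_comm, e, smul_zero, smul_zero]
  · have e : (p - t) * (p + t) = 0 := by
      rw [sub_mul, mul_add, mul_add, hpp, htp]; abel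
    rw [smul_mul_assoc, mul_smul_comm, e, smul_zero, smul_zero]
  · have e : (q + s) * (q - s) = 0 := by
      rw [add_mul, mul_sub, mul_sub, hqq, hqs]; abel
    rw [smul_mul_assoc, mul_smul_comm, e, smul_zero, smul_zero]
  · have e : (q - s) * (q + s) = 0 := by
      rw [sub_mul, mul_add, mul_add, hqq, hsq]; abel
    rw [smul_mul_assoc, mul_smul_comm, e, smul_zero, smul_zero]
end
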